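/- Let K be a field and let a_0(S), a_1(S), b_01(S), b_10(S), c_01(S), c_10(S) and a_0(T), a_1(T), b_01(T), b_10(T), c_01(T), c_10(T) be nonzero elements of K. Define Δ_01(x) = (a_0(x)a_1(x) + b_01(x)b_10(x) - c_01(x)c_10(x)) / (a_0(x)b_01(x)) for x ∈ {S,T}. Then the system of seven equations Y_1 = Y_2 = Y_3 = Y_4 = Y_5 = Y_6 = Y_7 = 0 (as defined in the context) has a solution (A_0, A_1, B_01, B_10, C_01, C_10) ∈ K^6 with C_01 ≠ 0 if and only if Δ_01(S) = Δ_01(T). -/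

import Mathlib

/-- Baxter's Δ condition for solvability of the two-color (six-vertex) model. -/
theorem stmt0 {K : Type*} [Field K]
    (a0S a1S b01S b10S c01S c10S a0T a1T b01T b10T c01T c10T : K)
    (ha0S : a0S ≠ 0) (ha1S : a1S ≠ 0) (hb01S : b01S ≠ 0) (hb10S : b10S ≠ 0)
    (hc01S : c01S ≠ 0) (hc10S : c10S ≠ 0)
    (ha0T : a0T ≠ 0) (ha1T : a1T ≠ 0) (hb01T : b01T ≠ 0) (hb10T : b10T ≠ 0)
    (hc01T : c01T ≠ 0) (hc10T : c10T ≠ 0) :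
    (∃ A0 A1 B01 B10 C01 C10 : K, C01 ≠ 0 ∧
      A0 * b01S * c01T - B01 * a0S * c01T - C10 * b01T * c01S = 0 ∧
      A0 * a0T * c01S - B10 * b01T * c01S - C01 * a0S * c01T = 0 ∧
      B01 * a0S * c10T + C01 * b01T * c10S - A0 * b01S * c10T = 0 ∧
      C01 * c01T * c10S - C10 * c01S * c10T = 0 ∧
      C01 * a0T * b10S - B10 * c01S * c10T - C01 * a0S * b10T = 0 ∧
      B01 * c01S * c10T + C01 * a1S * b01T - C01 * a1T * b01S = 0 ∧
      B01 * b10T * c01S + C01 * a1S * c01T - A1 * a1T * c01S = 0) ↔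
    (a0S * a1S + b01S * b10S - c01S * c10S) / (a0S * b01S) =
      (a0T * a1T + b01T * b10T - c01T * c10T) / (a0T * b01T) := by
  rw [div_eq_div_iff (mul_ne_zero ha0S hb01S) (mul_ne_zero ha0T hb01T)]
  constructor
  · rintro ⟨A0, A1, B01, B10, C01, C10, hC, h1, h2, h3, h4, h5, h6, h7⟩
    have hkey : C01 * ((a0S * a1S + b01S * b10S - c01S * c10S) * (a0T * b01T) -
        (a0T * a1T + b01T * b10T - c01T * c10T) * (a0S * b01S)) = 0 := by
      linear_combination (-(b01S * c10T)) * h2 + (-(a0T * c01S)) * h3 +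
        (b01S * b01T) * h5 + (a0S * a0T) * h6
    rcases mul_eq_zero.mp hkey with h | h
    · exact absurd h hC
    · exact sub_eq_zero.mp h
  · intro hΔ
    refine ⟨(a0S * (a1T * b01S - a1S * b01T) + b01T * c01S * c10S) / (b01S * c01S * c10T),
      ((a1T * b01S - a1S * b01T) * b10T + a1S * c01T * c10T) / (a1T * c01S * c10T),
      (a1T * b01S - a1S * b01T) / (c01S * c10T),
      (a0T * b10S - a0S * b10T) / (c01S * c10T),
      1, c01T * c10S / (c01S * c10T), one_ne_zero, ?_, ?_, ?_, ?_, ?_, ?_, ?_⟩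
    · field_simp
      ring
    · field_simp
      linear_combination (-1) * hΔ
    · field_simp
      ring
    · field_simp
      ring
    · field_simp
      ring
    · field_simp
      ring
    · field_simp
      ring
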